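/- Let d ≥ 2 and let x, x' ∈ ℝ^{d-1} with ‖x‖₂ ≤ 1 and ‖x'‖₂ ≤ 1. Then ‖σ(x) − σ(x')‖₂ ≤ 2 ‖x − x'‖₂. -/

import Mathlib

open Finset

/-- The inverse stereographic projection `σ : ℝ^(d-1) → ℝ^d` with pole `(0,…,0,1)`:
`σ(x) = (2x₁/(1+S²), …, 2x_{d-1}/(1+S²), (−1+S²)/(1+S²))` where `S² = ∑ⱼ xⱼ²`. -/
noncomputable def sigma' {d : ℕ} (x : Fin (d - 1) → ℝ) : Fin d → ℝ := fun k =>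
  if h : (k : ℕ) < d - 1 then
    2 * x ⟨k, h⟩ / (1 + ∑ j, x j ^ 2)
  else
    (-1 + ∑ j, x j ^ 2) / (1 + ∑ j, x j ^ 2)

/-- The stereographic projection `τ : ℝ^d → ℝ^(d-1)` from the pole `(0,…,0,1)`:
`τ(x) = (x₁/(1−x_d), …, x_{d-1}/(1−x_d))`. -/
noncomputable def tau' {d : ℕ} (x : Fin d → ℝ) : Fin (d - 1) → ℝ := fun i =>
  x ⟨(i : ℕ), by have := i.isLt; omega⟩ / (1 - x ⟨d - 1, by have := i.isLt; omega⟩)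

/-- The projection pole `p = (0,…,0,1) ∈ ℝ^d`. -/
def pole (d : ℕ) : Fin d → ℝ := fun k => if (k : ℕ) = d - 1 then 1 else 0

/-- The Euclidean norm `‖x‖₂` of a vector `x ∈ ℝ^n`. -/
noncomputable def norm2 {n : ℕ} (x : Fin n → ℝ) : ℝ := Real.sqrt (∑ i, x i ^ 2)
/-- `σ` is `2`-Lipschitz on the closed unit ball of `ℝ^(d-1)`. -/
theorem sigma_lipschitz {d : ℕ} (hd : 2 ≤ d) (x x' : Fin (d - 1) → ℝ)
    (hx : norm2 x ≤ 1) (hx' : norm2 x' ≤ 1) :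
    norm2 (sigma' x - sigma' x') ≤ 2 * norm2 (x - x') := by
  obtain ⟨n, rfl⟩ : ∃ n, d = n + 1 := ⟨d - 1, by omega⟩
  have hSnn : (0:ℝ) ≤ ∑ j, x j ^ 2 := Finset.sum_nonneg fun i _ => sq_nonneg _
  have hS'nn : (0:ℝ) ≤ ∑ j, x' j ^ 2 := Finset.sum_nonneg fun i _ => sq_nonneg _
  set S : ℝ := ∑ j, x j ^ 2 with hS
  set S' : ℝ := ∑ j, x' j ^ 2 with hS'
  set P : ℝ := ∑ j, x j * x' j with hP
  have hA : (0:ℝ) < 1 + S := by linarith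
  have hA' : (0:ℝ) < 1 + S' := by linarith
  have hD : ∑ j, ((x - x') j) ^ 2 = S - 2 * P + S' := by
    have h : ∀ j, ((x - x') j) ^ 2 = x j ^ 2 - 2 * (x j * x' j) + x' j ^ 2 := by
      intro j; simp [Pi.sub_apply]; ring
    simp_rw [h]
    rw [Finset.sum_add_distrib, Finset.sum_sub_distrib, ← Finset.mul_sum]
  have hDnn : (0:ℝ) ≤ S - 2 * P + S' := by
    rw [← hD]; exact Finset.sum_nonneg fun i _ => sq_nonneg _
  have key : ∑ k : Fin (n+1), ((sigma' x - sigma' x') k) ^ 2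
      = 4 * (S - 2 * P + S') / ((1 + S) * (1 + S')) := by
    rw [Fin.sum_univ_castSucc]
    have h1 : ∀ i : Fin n, ((sigma' x - sigma' x') (Fin.castSucc i)) ^ 2
        = (x i * (1 + S') - x' i * (1 + S)) ^ 2 * (4 / ((1+S)*(1+S'))^2) := by
      intro i
      have hi : ((Fin.castSucc i : Fin (n+1)) : ℕ) < n + 1 - 1 := by
        simpa using i.isLt
      simp only [Pi.sub_apply, sigma', dif_pos hi, Fin.eta, ← hS, ← hS']
      have ex : ∀ h, x ⟨(Fin.castSucc i : ℕ), h⟩ = x i := fun _ => rfl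
      have ex' : ∀ h, x' ⟨(Fin.castSucc i : ℕ), h⟩ = x' i := fun _ => rfl
      simp only [ex, ex']
      field_simp
      ring
    have h2 : ((sigma' x - sigma' x') (Fin.last n)) ^ 2
        = (2 * (S - S')) ^ 2 / ((1+S)*(1+S'))^2 := by
      have hl : ¬ ((Fin.last n : Fin (n+1)) : ℕ) < n + 1 - 1 := by simp
      simp only [Pi.sub_apply, sigma', dif_neg hl, ← hS, ← hS']
      rw [div_sub_div _ _ (ne_of_gt hA) (ne_of_gt hA'), div_pow]
      congr 1
      ring
    simp_rw [h1, h2]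
    rw [← Finset.sum_mul]
    have hexp : ∑ i : Fin n, (x i * (1 + S') - x' i * (1 + S)) ^ 2
        = S * (1+S')^2 - 2 * P * ((1+S)*(1+S')) + S' * (1+S)^2 := by
      have h : ∀ i : Fin n, (x i * (1 + S') - x' i * (1 + S)) ^ 2
          = x i ^ 2 * (1+S')^2 - (x i * x' i) * (2 * ((1+S)*(1+S'))) + x' i ^ 2 * (1+S)^2 := by
        intro i; ring
      simp_rw [h]
      rw [Finset.sum_add_distrib, Finset.sum_sub_distrib, ← Finset.sum_mul, ← Finset.sum_mul,
        ← Finset.sum_mul]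
      have e1 : (∑ i : Fin n, x i ^ 2) = S := rfl
      have e2 : (∑ i : Fin n, x' i ^ 2) = S' := rfl
      have e3 : (∑ i : Fin n, x i * x' i) = P := rfl
      rw [e1, e2, e3]
      ring
    rw [hexp]
    field_simp
    ring
  have hkey' : ∑ k : Fin (n+1), ((sigma' x - sigma' x') k) ^ 2 ≤ 4 * (S - 2 * P + S') := by
    rw [key]
    apply div_le_self (by linarith)
    nlinarith
  unfold norm2
  calc Real.sqrt (∑ k, ((sigma' x - sigma' x') k) ^ 2)
      ≤ Real.sqrt (4 * (S - 2 * P + S')) := Real.sqrt_le_sqrt hkey'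
    _ = 2 * Real.sqrt (∑ j, ((x - x') j) ^ 2) := by
        rw [hD, show (4:ℝ) * (S - 2*P + S') = 2^2 * (S - 2*P + S') by ring,
          Real.sqrt_mul (by positivity), Real.sqrt_sq (by norm_num)]
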